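/- For every nonnegative integer m, the sum over k from 0 to m of C(2k,k) * C(3k,k) * C(6k,3k) * C(k, m-k) * (-432)^(m-k) equals the sum over k from 0 to m of C(3k,k) * C(6k,3k) * C(3(m-k), m-k) * C(6(m-k), 3(m-k)). -/

import Mathlib

open Finset

private def aQ (n : ℕ) : ℚ := (Nat.choose (3*n) n : ℚ) * (Nat.choose (6*n) (3*n) : ℚ)
private def bQ (n : ℕ) : ℚ :=
  (Nat.choose (2*n) n : ℚ) * (Nat.choose (3*n) n : ℚ) * (Nat.choose (6*n) (3*n) : ℚ)

private lemma fact_cast_succ (m : ℕ) :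
    (Nat.factorial (m+1) : ℚ) = ((m:ℚ)+1) * Nat.factorial m := by
  push_cast [Nat.factorial_succ]; ring

private lemma aQ_eq (n : ℕ) : aQ n =
    (Nat.factorial (6*n) : ℚ) /
      (Nat.factorial (3*n) * Nat.factorial (2*n) * Nat.factorial n) := by
  unfold aQ
  rw [Nat.cast_choose ℚ (by omega : n ≤ 3*n), Nat.cast_choose ℚ (by omega : 3*n ≤ 6*n),
    show 3*n - n = 2*n by omega, show 6*n - 3*n = 3*n by omega]
  have h1 : (Nat.factorial n : ℚ) ≠ 0 := Nat.cast_ne_zero.mpr (Nat.factorial_ne_zero _)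
  have h2 : (Nat.factorial (2*n) : ℚ) ≠ 0 := Nat.cast_ne_zero.mpr (Nat.factorial_ne_zero _)
  have h3 : (Nat.factorial (3*n) : ℚ) ≠ 0 := Nat.cast_ne_zero.mpr (Nat.factorial_ne_zero _)
  field_simp

private lemma bQ_eq (n : ℕ) : bQ n =
    (Nat.factorial (6*n) : ℚ) /
      (Nat.factorial (3*n) * (Nat.factorial n)^3) := by
  unfold bQ
  rw [Nat.cast_choose ℚ (by omega : n ≤ 2*n), Nat.cast_choose ℚ (by omega : n ≤ 3*n),
    Nat.cast_choose ℚ (by omega : 3*n ≤ 6*n),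
    show 2*n - n = n by omega, show 3*n - n = 2*n by omega, show 6*n - 3*n = 3*n by omega]
  have h1 : (Nat.factorial n : ℚ) ≠ 0 := Nat.cast_ne_zero.mpr (Nat.factorial_ne_zero _)
  have h2 : (Nat.factorial (2*n) : ℚ) ≠ 0 := Nat.cast_ne_zero.mpr (Nat.factorial_ne_zero _)
  have h3 : (Nat.factorial (3*n) : ℚ) ≠ 0 := Nat.cast_ne_zero.mpr (Nat.factorial_ne_zero _)
  field_simp

private lemma fact6 (n : ℕ) : (Nat.factorial (6*(n+1)) : ℚ) =
    (6*(n:ℚ)+6)*(6*n+5)*(6*n+4)*(6*n+3)*(6*n+2)*(6*n+1) * Nat.factorial (6*n) := by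
  rw [show 6*(n+1) = (6*n+5)+1 by omega, fact_cast_succ,
    show 6*n+5 = (6*n+4)+1 by omega, fact_cast_succ,
    show 6*n+4 = (6*n+3)+1 by omega, fact_cast_succ,
    show 6*n+3 = (6*n+2)+1 by omega, fact_cast_succ,
    show 6*n+2 = (6*n+1)+1 by omega, fact_cast_succ,
    show 6*n+1 = (6*n)+1 by omega, fact_cast_succ]
  push_cast
  ring

private lemma fact3 (n : ℕ) : (Nat.factorial (3*(n+1)) : ℚ) =
    (3*(n:ℚ)+3)*(3*n+2)*(3*n+1) * Nat.factorial (3*n) := by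
  rw [show 3*(n+1) = (3*n+2)+1 by omega, fact_cast_succ,
    show 3*n+2 = (3*n+1)+1 by omega, fact_cast_succ,
    show 3*n+1 = (3*n)+1 by omega, fact_cast_succ]
  push_cast
  ring

private lemma fact2 (n : ℕ) : (Nat.factorial (2*(n+1)) : ℚ) =
    (2*(n:ℚ)+2)*(2*n+1) * Nat.factorial (2*n) := by
  rw [show 2*(n+1) = (2*n+1)+1 by omega, fact_cast_succ,
    show 2*n+1 = (2*n)+1 by omega, fact_cast_succ]
  push_cast
  ring

private lemma aQ_succ (n : ℕ) :
    ((n:ℚ)+1)^2 * aQ (n+1) = 12*(6*(n:ℚ)+1)*(6*(n:ℚ)+5) * aQ n := by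
  rw [aQ_eq, aQ_eq, fact6, fact3, fact2, fact_cast_succ]
  have h1 : (Nat.factorial n : ℚ) ≠ 0 := Nat.cast_ne_zero.mpr (Nat.factorial_ne_zero _)
  have h2 : (Nat.factorial (2*n) : ℚ) ≠ 0 := Nat.cast_ne_zero.mpr (Nat.factorial_ne_zero _)
  have h3 : (Nat.factorial (3*n) : ℚ) ≠ 0 := Nat.cast_ne_zero.mpr (Nat.factorial_ne_zero _)
  have h4 : ((n:ℚ)+1) ≠ 0 := by positivity
  have h5 : (3*(n:ℚ)+3) ≠ 0 := by positivity
  have h6 : (3*(n:ℚ)+2) ≠ 0 := by positivity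
  have h7 : (3*(n:ℚ)+1) ≠ 0 := by positivity
  have h8 : (2*(n:ℚ)+2) ≠ 0 := by positivity
  have h9 : (2*(n:ℚ)+1) ≠ 0 := by positivity
  field_simp
  ring

private lemma bQ_succ (n : ℕ) : ((n:ℚ)+1)^3 * bQ (n+1)
    = 8*(6*(n:ℚ)+1)*(6*(n:ℚ)+3)*(6*(n:ℚ)+5) * bQ n := by
  rw [bQ_eq, bQ_eq, fact6, fact3, fact_cast_succ]
  have h1 : (Nat.factorial n : ℚ) ≠ 0 := Nat.cast_ne_zero.mpr (Nat.factorial_ne_zero _)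
  have h3 : (Nat.factorial (3*n) : ℚ) ≠ 0 := Nat.cast_ne_zero.mpr (Nat.factorial_ne_zero _)
  have h4 : ((n:ℚ)+1) ≠ 0 := by positivity
  field_simp
  ring

private lemma chooseR (i j : ℕ) :
    (Nat.choose i (j+1) : ℚ) * ((j:ℚ)+1) = (Nat.choose i j : ℚ) * ((i:ℚ) - (j:ℚ)) := by
  rcases le_or_gt j i with h | h
  · have hc : ((Nat.choose i (j+1) * (j+1) : ℕ) : ℚ) = ((Nat.choose i j * (i - j) : ℕ) : ℚ) :=
      congrArg _ (Nat.choose_succ_right_eq i j)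
    push_cast [Nat.cast_sub h] at hc
    linarith [hc]
  · rw [Nat.choose_eq_zero_of_lt h, Nat.choose_eq_zero_of_lt (by omega)]
    push_cast; ring

private lemma chooseL (i j : ℕ) :
    (Nat.choose (i+1) (j+1) : ℚ) * ((j:ℚ)+1) = (Nat.choose i j : ℚ) * ((i:ℚ)+1) := by
  have hc : ((Nat.succ i * Nat.choose i j : ℕ) : ℚ)
      = ((Nat.choose (Nat.succ i) (Nat.succ j) * Nat.succ j : ℕ) : ℚ) :=
    congrArg _ (Nat.add_one_mul_choose_eq i j)
  push_cast [Nat.succ_eq_add_one] at hc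
  linarith [hc]

private def P0 (m : ℚ) : ℚ := -20736*(m+1)*(3*m+1)*(3*m+5)
private def P1 (m : ℚ) : ℚ := 24*(2*m+3)*(18*m^2+54*m+41)
private def P2 (m : ℚ) : ℚ := -(m+2)^3
private def Mpoly (m k : ℚ) : ℚ := -48 * k^2 * (342 - 186*k + 387*m - 108*k*m + 108*m^2)

private def tL (i j : ℕ) : ℚ := bQ i * (Nat.choose i j : ℚ) * (-432:ℚ)^j
private def dL (i j : ℕ) : ℚ := ((i:ℚ)+(j:ℚ)+1) * (i:ℚ)^2 * tL i (j+1)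
private def tR (i j : ℕ) : ℚ := aQ i * aQ j
private def dR (i j : ℕ) : ℚ :=
  Mpoly ((i:ℚ)+(j:ℚ)-1) (i:ℚ) * aQ i * aQ j / (12*((j:ℚ)+1)^2)

private lemma keyL (i j : ℕ) :
    P0 ((i:ℚ)+j) * tL i j + P1 ((i:ℚ)+j) * tL i (j+1) + P2 ((i:ℚ)+j) * tL i (j+2)
      = dL (i+1) j - dL i (j+1) := by
  have hj1 : ((j:ℚ)+1) ≠ 0 := by positivity
  have hj2 : ((j:ℚ)+2) ≠ 0 := by positivity
  have hi1 : ((i:ℚ)+1) ≠ 0 := by positivity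
  have h2 : (Nat.choose i (j+2) : ℚ)
      = (Nat.choose i (j+1) : ℚ) * ((i:ℚ) - (j:ℚ) - 1) / ((j:ℚ)+2) := by
    have h := chooseR i (j+1)
    push_cast at h
    rw [eq_div_iff hj2]
    simp only [show j+1+1 = j+2 from rfl] at h
    linarith [h]
  have h1 : (Nat.choose i (j+1) : ℚ)
      = (Nat.choose i j : ℚ) * ((i:ℚ) - (j:ℚ)) / ((j:ℚ)+1) := by
    rw [eq_div_iff hj1]; exact chooseR i j
  have h3 : (Nat.choose (i+1) (j+1) : ℚ)
      = (Nat.choose i j : ℚ) * ((i:ℚ)+1) / ((j:ℚ)+1) := by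
    rw [eq_div_iff hj1]; exact chooseL i j
  have hb : bQ (i+1) = 8*(6*(i:ℚ)+1)*(6*(i:ℚ)+3)*(6*(i:ℚ)+5) * bQ i / ((i:ℚ)+1)^3 := by
    rw [eq_div_iff (by positivity)]; linarith [bQ_succ i]
  unfold dL tL P0 P1 P2
  simp only [show j+1+1 = j+2 from rfl]
  rw [h2, h1, h3, hb]
  push_cast
  field_simp
  ring

private lemma keyR (i j : ℕ) :
    P0 ((i:ℚ)+j) * tR i j + P1 ((i:ℚ)+j) * tR i (j+1) + P2 ((i:ℚ)+j) * tR i (j+2)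
      = dR (i+1) j - dR i (j+1) := by
  have hj1 : ((j:ℚ)+1) ≠ 0 := by positivity
  have hj2 : ((j:ℚ)+2) ≠ 0 := by positivity
  have hi1 : ((i:ℚ)+1) ≠ 0 := by positivity
  have ha2 : aQ (j+2) = 12*(6*(j:ℚ)+7)*(6*(j:ℚ)+11) * aQ (j+1) / ((j:ℚ)+2)^2 := by
    have h := aQ_succ (j+1)
    push_cast at h
    rw [eq_div_iff (by positivity)]
    simp only [show j+1+1 = j+2 from rfl] at h
    linarith [h]
  have ha1 : aQ (j+1) = 12*(6*(j:ℚ)+1)*(6*(j:ℚ)+5) * aQ j / ((j:ℚ)+1)^2 := by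
    rw [eq_div_iff (by positivity)]; linarith [aQ_succ j]
  have ha3 : aQ (i+1) = 12*(6*(i:ℚ)+1)*(6*(i:ℚ)+5) * aQ i / ((i:ℚ)+1)^2 := by
    rw [eq_div_iff (by positivity)]; linarith [aQ_succ i]
  unfold dR tR P0 P1 P2 Mpoly
  rw [ha2, ha1, ha3]
  push_cast
  field_simp
  ring

private def S (t : ℕ → ℕ → ℚ) (m : ℕ) : ℚ := ∑ k ∈ Finset.range (m+1), t k (m-k)

private lemma genrec (t d : ℕ → ℕ → ℚ)
    (key : ∀ i j : ℕ, P0 ((i:ℚ)+j) * t i j + P1 ((i:ℚ)+j) * t i (j+1)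
      + P2 ((i:ℚ)+j) * t i (j+2) = d (i+1) j - d i (j+1)) (m : ℕ) :
    P0 m * S t m + P1 m * S t (m+1) + P2 m * S t (m+2)
      = d (m+1) 0 - d 0 (m+1) + P1 (m:ℚ) * t (m+1) 0
        + P2 (m:ℚ) * (t (m+2) 0 + t (m+1) 1) := by
  have H : ∑ k ∈ Finset.range (m+1),
        (P0 (m:ℚ) * t k (m-k) + P1 (m:ℚ) * t k (m-k+1) + P2 (m:ℚ) * t k (m-k+2))
      = ∑ k ∈ Finset.range (m+1), (d (k+1) (m-k) - d k (m-k+1)) := by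
    refine Finset.sum_congr rfl (fun k hk => ?_)
    have hk' : k ≤ m := by simpa [Nat.lt_succ_iff] using hk
    have hc : ((k:ℚ) + ((m-k : ℕ):ℚ)) = (m:ℚ) := by rw [Nat.cast_sub hk']; ring
    have h := key k (m-k); rw [hc] at h; exact h
  have T1 : S t (m+1) = (∑ k ∈ Finset.range (m+1), t k (m-k+1)) + t (m+1) 0 := by
    unfold S
    rw [Finset.sum_range_succ]
    congr 1
    · exact Finset.sum_congr rfl (fun k hk => by
        have hk' : k ≤ m := by simpa [Nat.lt_succ_iff] using hk
        rw [show m+1-k = m-k+1 by omega])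
    · rw [show m+1-(m+1) = 0 by omega]
  have T2 : S t (m+2) = (∑ k ∈ Finset.range (m+1), t k (m-k+2)) + t (m+1) 1 + t (m+2) 0 := by
    unfold S
    rw [show m+2+1 = (m+1)+1+1 by omega, Finset.sum_range_succ, Finset.sum_range_succ]
    rw [show m+2-(m+1+1) = 0 by omega, show m+2-(m+1) = 1 by omega,
      show m+1+1 = m+2 by omega]
    congr 2
    exact Finset.sum_congr rfl (fun k hk => by
      have hk' : k ≤ m := by simpa [Nat.lt_succ_iff] using hk
      rw [show m+2-k = m-k+2 by omega])
  have T3 : ∑ k ∈ Finset.range (m+1), (d (k+1) (m-k) - d k (m-k+1))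
      = d (m+1) 0 - d 0 (m+1) := by
    have e : ∑ k ∈ Finset.range (m+1), (d (k+1) (m-k) - d k (m-k+1))
        = ∑ k ∈ Finset.range (m+1),
            ((fun k => d k (m+1-k)) (k+1) - (fun k => d k (m+1-k)) k) :=
      Finset.sum_congr rfl (fun k hk => by
        have hk' : k ≤ m := by simpa [Nat.lt_succ_iff] using hk
        simp only []
        rw [show m+1-(k+1) = m-k by omega, show m+1-k = m-k+1 by omega])
    rw [e, Finset.sum_range_sub (fun k => d k (m+1-k)) (m+1)]
    rw [show m+1-(m+1) = 0 by omega, show m+1-0 = m+1 by omega]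
  have expand : ∑ k ∈ Finset.range (m+1),
        (P0 (m:ℚ) * t k (m-k) + P1 (m:ℚ) * t k (m-k+1) + P2 (m:ℚ) * t k (m-k+2))
      = P0 (m:ℚ) * S t m + P1 (m:ℚ) * (∑ k ∈ Finset.range (m+1), t k (m-k+1))
        + P2 (m:ℚ) * (∑ k ∈ Finset.range (m+1), t k (m-k+2)) := by
    rw [Finset.sum_add_distrib, Finset.sum_add_distrib, ← Finset.mul_sum, ← Finset.mul_sum,
      ← Finset.mul_sum]
    rfl
  rw [expand, T3] at H
  rw [T1, T2]
  linear_combination H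

private lemma recL (m : ℕ) :
    P0 m * S tL m + P1 m * S tL (m+1) + P2 m * S tL (m+2) = 0 := by
  rw [genrec tL dL keyL m]
  have e0 : ∀ n : ℕ, tL n 0 = bQ n := by
    intro n; unfold tL; simp
  have e1 : tL (m+1) 1 = bQ (m+1) * ((m:ℚ)+1) * (-432) := by
    unfold tL
    rw [Nat.choose_one_right]
    push_cast; ring
  have edL1 : dL (m+1) 0 = ((m:ℚ)+2) * ((m:ℚ)+1)^2 * tL (m+1) 1 := by
    unfold dL
    push_cast; ring
  have edL0 : dL 0 (m+1) = 0 := by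
    unfold dL; push_cast; ring
  rw [edL1, edL0, e1, e0, e0]
  have hb : ((m:ℚ)+2)^3 * bQ (m+2)
      = 8*(6*(m:ℚ)+7)*(6*(m:ℚ)+9)*(6*(m:ℚ)+13-2) * bQ (m+1) := by
    have h := bQ_succ (m+1)
    push_cast at h
    simp only [show m+1+1 = m+2 from rfl] at h
    linarith [h]
  unfold P1 P2
  linear_combination (-1 : ℚ) * hb

private lemma recR (m : ℕ) :
    P0 m * S tR m + P1 m * S tR (m+1) + P2 m * S tR (m+2) = 0 := by
  rw [genrec tR dR keyR m]
  have ha0 : aQ 0 = 1 := by unfold aQ; norm_num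
  have ha1 : aQ 1 = 60 := by unfold aQ; norm_num [Nat.choose]
  have e0 : ∀ n : ℕ, tR n 0 = aQ n := by
    intro n; unfold tR; rw [ha0]; ring
  have e1 : tR (m+1) 1 = 60 * aQ (m+1) := by
    unfold tR; rw [ha1]; ring
  have edR1 : dR (m+1) 0 = Mpoly ((m:ℚ)) ((m:ℚ)+1) * aQ (m+1) / 12 := by
    unfold dR; rw [ha0]; push_cast; ring_nf
  have edR0 : dR 0 (m+1) = 0 := by
    unfold dR Mpoly; rw [ha0]; push_cast
    norm_num
  rw [edR1, edR0, e1, e0, e0]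
  have ha : ((m:ℚ)+2)^2 * aQ (m+2) = 12*(6*(m:ℚ)+7)*(6*(m:ℚ)+11) * aQ (m+1) := by
    have h := aQ_succ (m+1)
    push_cast at h
    simp only [show m+1+1 = m+2 from rfl] at h
    linarith [h]
  unfold P1 P2 Mpoly
  linear_combination (-((m:ℚ)+2)) * ha

private lemma P2_ne (m : ℕ) : P2 (m:ℚ) ≠ 0 := by
  unfold P2
  have : ((m:ℚ)+2)^3 > 0 := by positivity
  intro h
  rw [neg_eq_zero] at h
  linarith

private lemma SL0 : S tL 0 = 1 := by
  unfold S tL bQ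
  norm_num

private lemma SR0 : S tR 0 = 1 := by
  unfold S tR aQ
  norm_num

private lemma SL1 : S tL 1 = 120 := by
  unfold S tL bQ
  rw [Finset.sum_range_succ, Finset.sum_range_succ]
  norm_num [Nat.choose]

private lemma SR1 : S tR 1 = 120 := by
  unfold S tR aQ
  rw [Finset.sum_range_succ, Finset.sum_range_succ]
  norm_num [Nat.choose]

private lemma mainQ : ∀ m : ℕ, S tL m = S tR m := by
  have key : ∀ m : ℕ, S tL m = S tR m ∧ S tL (m+1) = S tR (m+1) := by
    intro m
    induction m with
    | zero => exact ⟨SL0.trans SR0.symm, SL1.trans SR1.symm⟩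
    | succ n ih =>
      obtain ⟨h1, h2⟩ := ih
      refine ⟨h2, ?_⟩
      have rL := recL n
      have rR := recR n
      have h : P2 (n:ℚ) * S tL (n+1+1) = P2 (n:ℚ) * S tR (n+1+1) := by
        simp only [show ∀ p:ℕ, p+1+1 = p+2 from fun p => rfl]
        linear_combination rL - rR - P0 (n:ℚ) * h1 - P1 (n:ℚ) * h2
      exact mul_left_cancel₀ (P2_ne n) h
  exact fun m => (key m).1

theorem stmt_2 (m : ℕ) :
    ∑ k ∈ Finset.range (m + 1),
      ((Nat.choose (2 * k) k : ℤ) * Nat.choose (3 * k) k * Nat.choose (6 * k) (3 * k) *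
        Nat.choose k (m - k) * (-432) ^ (m - k))
    = ∑ k ∈ Finset.range (m + 1),
      ((Nat.choose (3 * k) k : ℤ) * Nat.choose (6 * k) (3 * k) *
        Nat.choose (3 * (m - k)) (m - k) * Nat.choose (6 * (m - k)) (3 * (m - k))) := by
  have h := mainQ m
  unfold S tL tR bQ aQ at h
  have h2 : ((∑ k ∈ Finset.range (m + 1),
      ((Nat.choose (2 * k) k : ℤ) * Nat.choose (3 * k) k * Nat.choose (6 * k) (3 * k) *
        Nat.choose k (m - k) * (-432) ^ (m - k)) : ℤ) : ℚ)
      = ((∑ k ∈ Finset.range (m + 1),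
      ((Nat.choose (3 * k) k : ℤ) * Nat.choose (6 * k) (3 * k) *
        Nat.choose (3 * (m - k)) (m - k) * Nat.choose (6 * (m - k)) (3 * (m - k))) : ℤ) : ℚ) := by
    push_cast
    convert h using 2 with k hk
    all_goals ring
  exact_mod_cast h2
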